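/- Let Λ be a channel on the bipartite system A × B and let U_A, U_B be unitaries on ℂ^A and ℂ^B respectively. If for all unit vectors |ψ⟩ ∈ ℂ^A and |φ⟩ ∈ ℂ^B one has Tr_B(Λ[|ψ⟩⟨ψ| ⊗ |φ⟩⟨φ|]) = U_A|ψ⟩⟨ψ|U_A† and Tr_A(Λ[|ψ⟩⟨ψ| ⊗ |φ⟩⟨φ|]) = U_B|φ⟩⟨φ|U_B†, then Λ[X] = (U_A ⊗ U_B) X (U_A ⊗ U_B)† for every matrix X; i.e., the equivalence class of causal channels with reduced maps given by U_A and U_B contains only the product unitary channel. -/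

import Mathlib

open Matrix BigOperators
open scoped Kronecker ComplexOrder

noncomputable section

/-- Partial trace over the `A` factor. -/
def trA {A B : Type*} [Fintype A] (ρ : Matrix (A × B) (A × B) ℂ) : Matrix B B ℂ :=
  Matrix.of fun b b' => ∑ a, ρ (a, b) (a, b')

/-- Partial trace over the `B` factor. -/
def trB {A B : Type*} [Fintype B] (ρ : Matrix (A × B) (A × B) ℂ) : Matrix A A ℂ :=
  Matrix.of fun a a' => ∑ b, ρ (a, b) (a', b)

/-- A state: positive semidefinite matrix of trace 1. -/
def IsState {n : Type*} [Fintype n] (ρ : Matrix n n ℂ) : Prop :=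
  ρ.PosSemidef ∧ ρ.trace = 1

/-- A channel: a map admitting a Kraus representation `Λ[X] = ∑ i, K i * X * (K i)ᴴ`
with `∑ i, (K i)ᴴ * K i = 1` (completely positive and trace-preserving). -/
def IsChannel {n : Type*} [Fintype n] [DecidableEq n]
    (Λ : Matrix n n ℂ → Matrix n n ℂ) : Prop :=
  ∃ (m : ℕ) (K : Fin m → Matrix n n ℂ),
    (∀ X, Λ X = ∑ i, K i * X * (K i)ᴴ) ∧ (∑ i, (K i)ᴴ * K i = 1)

/-- The induced map `Γ ⊗ id` on the bipartite system, acting blockwise. -/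
def tensIdA {A B : Type*} (Γ : Matrix A A ℂ → Matrix A A ℂ)
    (ρ : Matrix (A × B) (A × B) ℂ) : Matrix (A × B) (A × B) ℂ :=
  Matrix.of fun p q => Γ (Matrix.of fun a a' => ρ (a, p.2) (a', q.2)) p.1 q.1

/-- The induced map `id ⊗ Γ` on the bipartite system, acting blockwise. -/
def tensIdB {A B : Type*} (Γ : Matrix B B ℂ → Matrix B B ℂ)
    (ρ : Matrix (A × B) (A × B) ℂ) : Matrix (A × B) (A × B) ℂ :=
  Matrix.of fun p q => Γ (Matrix.of fun b b' => ρ (p.1, b) (q.1, b')) p.2 q.2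

/-- `Λ` is A↛B semicausal: no channel applied by Alice beforehand affects Bob's
reduced output state. -/
def SemicausalAtoB {A B : Type*} [Fintype A] [Fintype B] [DecidableEq A]
    (Λ : Matrix (A × B) (A × B) ℂ → Matrix (A × B) (A × B) ℂ) : Prop :=
  ∀ ρ : Matrix (A × B) (A × B) ℂ, IsState ρ →
    ∀ Γ : Matrix A A ℂ → Matrix A A ℂ, IsChannel Γ →
      trA (Λ (tensIdA Γ ρ)) = trA (Λ ρ)

/-- `Λ` is A↚B semicausal: no channel applied by Bob beforehand affects Alice's
reduced output state. -/
def SemicausalBtoA {A B : Type*} [Fintype A] [Fintype B] [DecidableEq B]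
    (Λ : Matrix (A × B) (A × B) ℂ → Matrix (A × B) (A × B) ℂ) : Prop :=
  ∀ ρ : Matrix (A × B) (A × B) ℂ, IsState ρ →
    ∀ Γ : Matrix B B ℂ → Matrix B B ℂ, IsChannel Γ →
      trB (Λ (tensIdB Γ ρ)) = trB (Λ ρ)

/-- `Λ` is causal: both A↛B and A↚B semicausal. -/
def Causal {A B : Type*} [Fintype A] [Fintype B] [DecidableEq A] [DecidableEq B]
    (Λ : Matrix (A × B) (A × B) ℂ → Matrix (A × B) (A × B) ℂ) : Prop :=
  SemicausalAtoB Λ ∧ SemicausalBtoA Λ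

/-- The tensor (Kronecker) product of two vectors. -/
def vtens {A B : Type*} (x : A → ℂ) (y : B → ℂ) : A × B → ℂ := fun p => x p.1 * y p.2

/-- The rank-one projector `|v⟩⟨v|` onto a vector `v`. -/
def projv {n : Type*} (v : n → ℂ) : Matrix n n ℂ :=
  Matrix.of fun i j => v i * star (v j)


/-! ### Auxiliary lemmas -/

section Aux

lemma projv_posSemidef {n : Type*} [Fintype n] (v : n → ℂ) : (projv v).PosSemidef := by
  refine Matrix.PosSemidef.of_dotProduct_mulVec_nonneg ?_ ?_
  · ext i j
    simp [projv, Matrix.conjTranspose_apply, mul_comm]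
  · intro x
    have : dotProduct (star x) ((projv v) *ᵥ x)
        = star (∑ j, star (v j) * x j) * (∑ j, star (v j) * x j) := by
      simp only [dotProduct, Matrix.mulVec, projv, Matrix.of_apply, Pi.star_apply,
        star_sum, star_mul', star_star, Finset.sum_mul, Finset.mul_sum]
      rw [Finset.sum_comm]
      apply Finset.sum_congr rfl; intro i _
      apply Finset.sum_congr rfl; intro j _
      ring
    rw [this]
    exact star_mul_self_nonneg _

lemma unitary_conj_projv {n : Type*} [Fintype n] (U : Matrix n n ℂ) (v : n → ℂ) :
    U * projv v * Uᴴ = projv (U *ᵥ v) := by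
  ext i j
  simp only [Matrix.mul_apply, projv, Matrix.of_apply, Matrix.conjTranspose_apply,
    Matrix.mulVec, dotProduct, star_sum, star_mul', Finset.sum_mul, Finset.mul_sum, star_star]
  apply Finset.sum_congr rfl; intro a _
  apply Finset.sum_congr rfl; intro b _
  ring

lemma unitary_mulVec_norm {n : Type*} [Fintype n] [DecidableEq n] (U : Matrix n n ℂ)
    (hU : U ∈ Matrix.unitaryGroup n ℂ) (v : n → ℂ) :
    ∑ i, star ((U *ᵥ v) i) * (U *ᵥ v) i = ∑ i, star (v i) * v i := by
  have h1 : Uᴴ * U = 1 := by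
    simpa [Matrix.star_eq_conjTranspose] using hU.1
  calc ∑ i, star ((U *ᵥ v) i) * (U *ᵥ v) i
      = ∑ a, ∑ b, (star (v b) * v a) * (Uᴴ * U) b a := by
        simp only [Matrix.mulVec, dotProduct, star_sum, star_mul', Matrix.mul_apply,
          Matrix.conjTranspose_apply, Finset.sum_mul, Finset.mul_sum]
        rw [Finset.sum_comm]
        refine Finset.sum_congr rfl fun a _ => ?_
        rw [Finset.sum_comm]
        exact Finset.sum_congr rfl fun b _ => Finset.sum_congr rfl fun i _ => by ring
    _ = ∑ i, star (v i) * v i := by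
        rw [h1]
        simp [Matrix.one_apply, mul_ite, mul_one, mul_zero]

lemma swap3 {α β γ : Type*} [Fintype α] [Fintype β] [Fintype γ] (f : α → β → γ → ℂ) :
    ∑ k, ∑ b, ∑ c, f k b c = ∑ c, ∑ k, ∑ b, f k b c := by
  calc ∑ k, ∑ b, ∑ c, f k b c = ∑ k, ∑ c, ∑ b, f k b c :=
        Finset.sum_congr rfl fun k _ => Finset.sum_comm
    _ = ∑ c, ∑ k, ∑ b, f k b c := Finset.sum_comm

lemma pure_marginal {A B : Type*} [Fintype A] [Fintype B]
    (ρ : Matrix (A × B) (A × B) ℂ) (hρ : ρ.PosSemidef)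
    (ψ : A → ℂ) (hψ : ∑ a, star (ψ a) * ψ a = 1)
    (hmar : trB ρ = projv ψ) :
    ∀ p q, ρ p q = ψ p.1 * star (ψ q.1) * trA ρ p.2 q.2 := by
  obtain ⟨C, hC⟩ : ∃ C : Matrix (A × B) (A × B) ℂ, ρ = Cᴴ * C := by
    classical
    open scoped MatrixOrder in
    obtain ⟨C, hC⟩ := CStarAlgebra.nonneg_iff_eq_star_mul_self.mp hρ.nonneg
    exact ⟨C, hC⟩
  have hent : ∀ p q : A × B, ρ p q = ∑ k, star (C k p) * C k q := by
    intro p q; rw [hC]; simp [Matrix.mul_apply, Matrix.conjTranspose_apply]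
  have hψ' : ∑ a, ψ a * star (ψ a) = 1 := by
    rw [← hψ]; exact Finset.sum_congr rfl fun a _ => mul_comm _ _
  have hG : ∀ a c, (∑ k, ∑ b, star (C k (a,b)) * C k (c,b)) = ψ a * star (ψ c) := by
    intro a c
    have h2 : trB ρ a c = projv ψ a c := by rw [hmar]
    simp only [trB, projv, Matrix.of_apply] at h2
    rw [Finset.sum_comm]
    calc ∑ b, ∑ k, star (C k (a,b)) * C k (c,b) = ∑ b, ρ (a,b) (c,b) :=
          Finset.sum_congr rfl fun b _ => (hent _ _).symm
      _ = ψ a * star (ψ c) := h2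
  set w : (A × B) → B → ℂ := fun k b => ∑ c, ψ c * C k (c, b) with hw
  have key : ∀ a k b, C k (a, b) = star (ψ a) * w k b := by
    intro a
    have hS1 : (∑ k, ∑ b, star (C k (a,b)) * C k (a,b)) = ψ a * star (ψ a) := hG a a
    have hS2 : (∑ k, ∑ b, star (C k (a,b)) * (star (ψ a) * w k b)) = ψ a * star (ψ a) := by
      calc (∑ k, ∑ b, star (C k (a,b)) * (star (ψ a) * w k b))
          = ∑ k, ∑ b, ∑ c, (star (ψ a) * ψ c) * (star (C k (a,b)) * C k (c,b)) := by
            refine Finset.sum_congr rfl fun k _ => Finset.sum_congr rfl fun b _ => ?_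
            rw [hw]; simp only [Finset.mul_sum]
            exact Finset.sum_congr rfl fun c _ => by ring
        _ = ∑ c, ∑ k, ∑ b, (star (ψ a) * ψ c) * (star (C k (a,b)) * C k (c,b)) := swap3 _
        _ = ∑ c, (star (ψ a) * ψ c) * (ψ a * star (ψ c)) := by
            refine Finset.sum_congr rfl fun c _ => ?_
            simp only [← Finset.mul_sum]
            rw [hG a c]
        _ = (star (ψ a) * ψ a) * ∑ c, ψ c * star (ψ c) := by
            rw [Finset.mul_sum]
            exact Finset.sum_congr rfl fun c _ => by ring
        _ = ψ a * star (ψ a) := by rw [hψ']; ring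
    have hS3 : (∑ k, ∑ b, star (star (ψ a) * w k b) * C k (a,b)) = ψ a * star (ψ a) := by
      calc (∑ k, ∑ b, star (star (ψ a) * w k b) * C k (a,b))
          = ∑ k, ∑ b, ∑ c, (ψ a * star (ψ c)) * (star (C k (c,b)) * C k (a,b)) := by
            refine Finset.sum_congr rfl fun k _ => Finset.sum_congr rfl fun b _ => ?_
            rw [hw]
            simp only [star_mul', star_star, star_sum, Finset.mul_sum, Finset.sum_mul]
            exact Finset.sum_congr rfl fun c _ => by ring
        _ = ∑ c, ∑ k, ∑ b, (ψ a * star (ψ c)) * (star (C k (c,b)) * C k (a,b)) := swap3 _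
        _ = ∑ c, (ψ a * star (ψ c)) * (ψ c * star (ψ a)) := by
            refine Finset.sum_congr rfl fun c _ => ?_
            simp only [← Finset.mul_sum]
            rw [hG c a]
        _ = (ψ a * star (ψ a)) * ∑ c, ψ c * star (ψ c) := by
            rw [Finset.mul_sum]
            exact Finset.sum_congr rfl fun c _ => by ring
        _ = ψ a * star (ψ a) := by rw [hψ']; ring
    have hww : (∑ k, ∑ b, star (w k b) * w k b) = 1 := by
      calc (∑ k, ∑ b, star (w k b) * w k b)
          = ∑ k, ∑ b, ∑ c, star (ψ c) * star (C k (c,b)) * w k b := by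
            refine Finset.sum_congr rfl fun k _ => Finset.sum_congr rfl fun b _ => ?_
            rw [hw]; simp only [star_sum, star_mul', Finset.sum_mul]
        _ = ∑ c, ∑ k, ∑ b, star (ψ c) * star (C k (c,b)) * w k b := swap3 _
        _ = ∑ c, ∑ k, ∑ b, ∑ d, (star (ψ c) * ψ d) * (star (C k (c,b)) * C k (d,b)) := by
            refine Finset.sum_congr rfl fun c _ => Finset.sum_congr rfl fun k _ =>
              Finset.sum_congr rfl fun b _ => ?_
            rw [hw]; simp only [Finset.mul_sum]
            exact Finset.sum_congr rfl fun d _ => by ring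
        _ = ∑ c, ∑ d, ∑ k, ∑ b, (star (ψ c) * ψ d) * (star (C k (c,b)) * C k (d,b)) :=
            Finset.sum_congr rfl fun c _ => swap3 _
        _ = ∑ c, ∑ d, (star (ψ c) * ψ d) * (ψ c * star (ψ d)) := by
            refine Finset.sum_congr rfl fun c _ => Finset.sum_congr rfl fun d _ => ?_
            simp only [← Finset.mul_sum]
            rw [hG c d]
        _ = (∑ c, star (ψ c) * ψ c) * (∑ d, ψ d * star (ψ d)) := by
            rw [Finset.sum_mul]
            refine Finset.sum_congr rfl fun c _ => ?_
            rw [Finset.mul_sum]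
            exact Finset.sum_congr rfl fun d _ => by ring
        _ = 1 := by rw [hψ, hψ']; ring
    have hS4 : (∑ k, ∑ b, star (star (ψ a) * w k b) * (star (ψ a) * w k b))
        = ψ a * star (ψ a) := by
      calc (∑ k, ∑ b, star (star (ψ a) * w k b) * (star (ψ a) * w k b))
          = ∑ k, ∑ b, (ψ a * star (ψ a)) * (star (w k b) * w k b) := by
            refine Finset.sum_congr rfl fun k _ => Finset.sum_congr rfl fun b _ => ?_
            simp only [star_mul', star_star]; ring
        _ = (ψ a * star (ψ a)) * ∑ k, ∑ b, star (w k b) * w k b := by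
            simp only [← Finset.mul_sum]
        _ = ψ a * star (ψ a) := by rw [hww, mul_one]
    have hzero : (∑ k, ∑ b, (Complex.normSq (C k (a,b) - star (ψ a) * w k b) : ℂ)) = 0 := by
      have expand : ∀ k b, (Complex.normSq (C k (a,b) - star (ψ a) * w k b) : ℂ)
          = star (C k (a,b)) * C k (a,b)
            - star (C k (a,b)) * (star (ψ a) * w k b)
            - star (star (ψ a) * w k b) * C k (a,b)
            + star (star (ψ a) * w k b) * (star (ψ a) * w k b) := by
        intro k b
        have hz : ∀ z : ℂ, (Complex.normSq z : ℂ) = star z * z := by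
          intro z; rw [Complex.star_def, mul_comm, Complex.mul_conj]
        rw [hz]
        simp only [star_sub]
        ring
      calc (∑ k, ∑ b, (Complex.normSq (C k (a,b) - star (ψ a) * w k b) : ℂ))
          = (∑ k, ∑ b, star (C k (a,b)) * C k (a,b))
            - (∑ k, ∑ b, star (C k (a,b)) * (star (ψ a) * w k b))
            - (∑ k, ∑ b, star (star (ψ a) * w k b) * C k (a,b))
            + (∑ k, ∑ b, star (star (ψ a) * w k b) * (star (ψ a) * w k b)) := by
            simp only [expand, Finset.sum_add_distrib, Finset.sum_sub_distrib]
        _ = 0 := by rw [hS1, hS2, hS3, hS4]; ring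
    intro k b
    have h0 : Complex.normSq (C k (a,b) - star (ψ a) * w k b) = 0 := by
      have h1 : (∑ k, ∑ b, Complex.normSq (C k (a,b) - star (ψ a) * w k b)) = 0 := by
        exact_mod_cast hzero
      have h2 := (Finset.sum_eq_zero_iff_of_nonneg (fun k _ =>
        Finset.sum_nonneg fun b _ => Complex.normSq_nonneg _)).mp h1 k (Finset.mem_univ k)
      exact (Finset.sum_eq_zero_iff_of_nonneg (fun b _ => Complex.normSq_nonneg _)).mp h2 b
        (Finset.mem_univ b)
    have := Complex.normSq_eq_zero.mp h0
    linear_combination this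
  intro p q
  have hkey' : ∀ (k : A × B) (p : A × B), C k p = star (ψ p.1) * w k p.2 := by
    intro k p; have := key p.1 k p.2; simpa using this
  have hσ : trA ρ p.2 q.2 = ∑ k, star (w k p.2) * w k q.2 := by
    simp only [trA, Matrix.of_apply]
    calc (∑ a, ρ (a, p.2) (a, q.2)) = ∑ a, ∑ k, star (C k (a, p.2)) * C k (a, q.2) :=
          Finset.sum_congr rfl fun a _ => hent _ _
      _ = ∑ a, (ψ a * star (ψ a)) * ∑ k, star (w k p.2) * w k q.2 := by
          refine Finset.sum_congr rfl fun a _ => ?_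
          rw [Finset.mul_sum]
          refine Finset.sum_congr rfl fun k _ => ?_
          rw [hkey' k (a, p.2), hkey' k (a, q.2)]
          simp only [star_mul', star_star]; ring
      _ = ∑ k, star (w k p.2) * w k q.2 := by
          rw [← Finset.sum_mul, hψ', one_mul]
  rw [hent p q, hσ, Finset.mul_sum]
  refine Finset.sum_congr rfl fun k _ => ?_
  rw [hkey' k p, hkey' k q]
  simp only [star_mul', star_star]; ring

lemma kron_mulVec {A B : Type*} [Fintype A] [Fintype B]
    (M : Matrix A A ℂ) (N : Matrix B B ℂ) (x : A → ℂ) (y : B → ℂ) :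
    (M ⊗ₖ N) *ᵥ vtens x y = vtens (M *ᵥ x) (N *ᵥ y) := by
  ext p
  simp only [Matrix.mulVec, dotProduct, vtens, Matrix.kroneckerMap_apply]
  rw [Fintype.sum_prod_type, Finset.sum_mul_sum]
  refine Finset.sum_congr rfl fun a _ => Finset.sum_congr rfl fun b _ => by ring

/-- generalized rank-one product matrix `|ψ⊗φ⟩⟨ψ'⊗φ'|`. -/
def pmat {A B : Type*} (ψ ψ' : A → ℂ) (φ φ' : B → ℂ) : Matrix (A × B) (A × B) ℂ :=
  Matrix.of fun p q => ψ p.1 * star (ψ' q.1) * (φ p.2 * star (φ' q.2))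

lemma polarizeA {A B : Type*} (ψ ψ' : A → ℂ) (φ : B → ℂ) :
    (4 : ℂ) • pmat ψ ψ' φ φ =
      projv (vtens (ψ + ψ') φ) - projv (vtens (ψ - ψ') φ)
      + Complex.I • projv (vtens (ψ + Complex.I • ψ') φ)
      - Complex.I • projv (vtens (ψ - Complex.I • ψ') φ) := by
  ext p q
  simp only [pmat, projv, vtens, Matrix.of_apply, Matrix.sub_apply, Matrix.add_apply,
    Matrix.smul_apply, Pi.add_apply, Pi.sub_apply, Pi.smul_apply, smul_eq_mul,
    star_mul', star_add, star_sub, Complex.star_def, _root_.map_mul, map_add, map_sub,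
    Complex.conj_I]
  ring_nf
  linear_combination (2 * ψ p.1 * (starRingEnd ℂ) (ψ' q.1) * φ p.2 * (starRingEnd ℂ) (φ q.2)
    - 2 * ψ' p.1 * (starRingEnd ℂ) (ψ q.1) * φ p.2 * (starRingEnd ℂ) (φ q.2)) * Complex.I_sq

lemma polarizeB {A B : Type*} (ψ ψ' : A → ℂ) (φ φ' : B → ℂ) :
    (4 : ℂ) • pmat ψ ψ' φ φ' =
      pmat ψ ψ' (φ + φ') (φ + φ') - pmat ψ ψ' (φ - φ') (φ - φ')
      + Complex.I • pmat ψ ψ' (φ + Complex.I • φ') (φ + Complex.I • φ')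
      - Complex.I • pmat ψ ψ' (φ - Complex.I • φ') (φ - Complex.I • φ') := by
  ext p q
  simp only [pmat, Matrix.of_apply, Matrix.sub_apply, Matrix.add_apply,
    Matrix.smul_apply, Pi.add_apply, Pi.sub_apply, Pi.smul_apply, smul_eq_mul,
    star_mul', star_add, star_sub, Complex.star_def, _root_.map_mul, map_add, map_sub,
    Complex.conj_I]
  ring_nf
  linear_combination (2 * ψ p.1 * (starRingEnd ℂ) (ψ' q.1) * φ p.2 * (starRingEnd ℂ) (φ' q.2)
    - 2 * ψ p.1 * (starRingEnd ℂ) (ψ' q.1) * φ' p.2 * (starRingEnd ℂ) (φ q.2)) * Complex.I_sq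

lemma pmat_single {A B : Type*} [DecidableEq A] [DecidableEq B] (p q : A × B) :
    Matrix.single p q (1 : ℂ) =
      pmat (Pi.single p.1 1) (Pi.single q.1 1) (Pi.single p.2 1) (Pi.single q.2 1) := by
  ext r s
  simp only [Matrix.single, pmat, Matrix.of_apply, Pi.single_apply]
  by_cases h1 : p.1 = r.1 <;> by_cases h2 : p.2 = r.2 <;>
    by_cases h3 : q.1 = s.1 <;> by_cases h4 : q.2 = s.2 <;>
    simp [h1, h2, h3, h4, Prod.ext_iff, eq_comm]

lemma projv_vtens_smul_left {A B : Type*} (c : ℂ) (ψ : A → ℂ) (φ : B → ℂ) :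
    projv (vtens (c • ψ) φ) = (c * star c) • projv (vtens ψ φ) := by
  ext p q
  simp only [projv, vtens, Matrix.of_apply, Pi.smul_apply, smul_eq_mul,
    Matrix.smul_apply, star_mul']
  ring

lemma projv_vtens_smul_right {A B : Type*} (c : ℂ) (ψ : A → ℂ) (φ : B → ℂ) :
    projv (vtens ψ (c • φ)) = (c * star c) • projv (vtens ψ φ) := by
  ext p q
  simp only [projv, vtens, Matrix.of_apply, Pi.smul_apply, smul_eq_mul,
    Matrix.smul_apply, star_mul']
  ring

lemma sum_star_self_eq_normSq {n : Type*} [Fintype n] (v : n → ℂ) :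
    ∑ i, star (v i) * v i = ((∑ i, Complex.normSq (v i) : ℝ) : ℂ) := by
  push_cast
  refine Finset.sum_congr rfl fun i _ => ?_
  rw [Complex.star_def, mul_comm, Complex.mul_conj]

lemma normalize_unit {n : Type*} [Fintype n] (v : n → ℂ) (hv : v ≠ 0) :
    ∑ i, star (((Real.sqrt (∑ i, Complex.normSq (v i)) : ℂ)⁻¹ • v) i) *
      (((Real.sqrt (∑ i, Complex.normSq (v i)) : ℂ)⁻¹ • v) i) = 1 := by
  have hspos : 0 < ∑ i, Complex.normSq (v i) := by
    obtain ⟨i, hi⟩ := Function.ne_iff.mp hv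
    exact Finset.sum_pos' (fun j _ => Complex.normSq_nonneg _)
      ⟨i, Finset.mem_univ i, Complex.normSq_pos.mpr hi⟩
  set s := ∑ i, Complex.normSq (v i) with hs
  have hr : Real.sqrt s ≠ 0 := ne_of_gt (Real.sqrt_pos.mpr hspos)
  have : ∀ i, star ((((Real.sqrt s : ℂ))⁻¹ • v) i) * ((((Real.sqrt s : ℂ))⁻¹ • v) i)
      = (((Real.sqrt s)⁻¹ ^ 2 : ℝ) : ℂ) * (star (v i) * v i) := by
    intro i
    simp only [Pi.smul_apply, smul_eq_mul, star_mul']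
    push_cast
    rw [← Complex.ofReal_inv]
    simp only [Complex.star_def, Complex.conj_ofReal]
    push_cast
    ring
  rw [Finset.sum_congr rfl fun i _ => this i, ← Finset.mul_sum,
    sum_star_self_eq_normSq]
  rw [← hs]
  rw [← Complex.ofReal_mul]
  norm_cast
  rw [inv_pow, Real.sq_sqrt hspos.le]
  field_simp

end Aux

/-- a channel whose two reduced maps on pure product inputs coincide with
the unitary channels of `U_A` and `U_B` must be the product unitary channel
`X ↦ (U_A ⊗ U_B) X (U_A ⊗ U_B)†`. -/
theorem stmt_13 {A B : Type*} [Fintype A] [Fintype B] [DecidableEq A] [DecidableEq B]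
    [Nonempty A] [Nonempty B]
    (Λ : Matrix (A × B) (A × B) ℂ → Matrix (A × B) (A × B) ℂ) (hΛ : IsChannel Λ)
    (UA : Matrix A A ℂ) (hUA : UA ∈ Matrix.unitaryGroup A ℂ)
    (UB : Matrix B B ℂ) (hUB : UB ∈ Matrix.unitaryGroup B ℂ)
    (h : ∀ ψ : A → ℂ, (∑ a, star (ψ a) * ψ a = 1) →
         ∀ φ : B → ℂ, (∑ b, star (φ b) * φ b = 1) →
          trB (Λ (projv (vtens ψ φ))) = UA * projv ψ * UAᴴ ∧
          trA (Λ (projv (vtens ψ φ))) = UB * projv φ * UBᴴ) :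
    ∀ X : Matrix (A × B) (A × B) ℂ,
      Λ X = (UA ⊗ₖ UB) * X * (UA ⊗ₖ UB)ᴴ := by
  obtain ⟨m, K, hK, hTP⟩ := hΛ
  set UU : Matrix (A × B) (A × B) ℂ := UA ⊗ₖ UB with hUU
  let g : Matrix (A × B) (A × B) ℂ →ₗ[ℂ] Matrix (A × B) (A × B) ℂ :=
    { toFun := fun X => Λ X - UU * X * UUᴴ
      map_add' := fun X Y => by
        simp only [hK, mul_add, add_mul, Finset.sum_add_distrib]
        abel
      map_smul' := fun c X => by
        simp only [hK, RingHom.id_apply, Matrix.mul_smul, Matrix.smul_mul,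
          ← Finset.smul_sum, smul_sub] }
  have gdef : ∀ X, g X = Λ X - UU * X * UUᴴ := fun X => rfl
  suffices hg : ∀ X, g X = 0 by
    intro X
    have := hg X
    rw [gdef X, sub_eq_zero] at this
    exact this
  have key0 : ∀ ψ : A → ℂ, (∑ a, star (ψ a) * ψ a = 1) → ∀ φ : B → ℂ,
      (∑ b, star (φ b) * φ b = 1) → g (projv (vtens ψ φ)) = 0 := by
    intro ψ hψ φ hφ
    obtain ⟨h1, h2⟩ := h ψ hψ φ hφ
    have hPSD : (Λ (projv (vtens ψ φ))).PosSemidef := by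
      rw [hK]
      exact Finset.sum_induction _ _ (fun a b ha hb => ha.add hb) Matrix.PosSemidef.zero
        (fun i _ => (projv_posSemidef _).mul_mul_conjTranspose_same _)
    have hmar : trB (Λ (projv (vtens ψ φ))) = projv (UA *ᵥ ψ) := by
      rw [h1, unitary_conj_projv]
    have hunit : ∑ a, star ((UA *ᵥ ψ) a) * (UA *ᵥ ψ) a = 1 := by
      rw [unitary_mulVec_norm UA hUA, hψ]
    have htrA : trA (Λ (projv (vtens ψ φ))) = projv (UB *ᵥ φ) := by
      rw [h2, unitary_conj_projv]
    have hfull := pure_marginal _ hPSD _ hunit hmar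
    have hΛP : Λ (projv (vtens ψ φ)) = projv (vtens (UA *ᵥ ψ) (UB *ᵥ φ)) := by
      ext p q
      rw [hfull p q, htrA]
      simp only [projv, vtens, Matrix.of_apply, star_mul']
      ring
    have hUUP : UU * projv (vtens ψ φ) * UUᴴ = projv (vtens (UA *ᵥ ψ) (UB *ᵥ φ)) := by
      rw [hUU, unitary_conj_projv, kron_mulVec]
    rw [gdef, hΛP, hUUP, sub_self]
  have key1 : ∀ (ψ : A → ℂ) (φ : B → ℂ), g (projv (vtens ψ φ)) = 0 := by
    intro ψ φ
    by_cases hψ0 : ψ = 0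
    · have h0 : projv (vtens ψ φ) = 0 := by
        ext p q; simp [projv, vtens, hψ0]
      rw [h0, map_zero]
    by_cases hφ0 : φ = 0
    · have h0 : projv (vtens ψ φ) = 0 := by
        ext p q; simp [projv, vtens, hφ0]
      rw [h0, map_zero]
    set cψ : ℂ := ((Real.sqrt (∑ a, Complex.normSq (ψ a)) : ℝ) : ℂ) with hcψ
    set cφ : ℂ := ((Real.sqrt (∑ b, Complex.normSq (φ b)) : ℝ) : ℂ) with hcφ
    have hsψ : 0 < ∑ a, Complex.normSq (ψ a) := by
      obtain ⟨i, hi⟩ := Function.ne_iff.mp hψ0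
      exact Finset.sum_pos' (fun j _ => Complex.normSq_nonneg _)
        ⟨i, Finset.mem_univ i, Complex.normSq_pos.mpr hi⟩
    have hsφ : 0 < ∑ b, Complex.normSq (φ b) := by
      obtain ⟨i, hi⟩ := Function.ne_iff.mp hφ0
      exact Finset.sum_pos' (fun j _ => Complex.normSq_nonneg _)
        ⟨i, Finset.mem_univ i, Complex.normSq_pos.mpr hi⟩
    have hcψ0 : cψ ≠ 0 := by
      rw [hcψ, Ne, Complex.ofReal_eq_zero]
      exact ne_of_gt (Real.sqrt_pos.mpr hsψ)
    have hcφ0 : cφ ≠ 0 := by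
      rw [hcφ, Ne, Complex.ofReal_eq_zero]
      exact ne_of_gt (Real.sqrt_pos.mpr hsφ)
    have hψeq : ψ = cψ • (cψ⁻¹ • ψ) := (smul_inv_smul₀ hcψ0 ψ).symm
    have hφeq : φ = cφ • (cφ⁻¹ • φ) := (smul_inv_smul₀ hcφ0 φ).symm
    calc g (projv (vtens ψ φ))
        = g (projv (vtens (cψ • (cψ⁻¹ • ψ)) (cφ • (cφ⁻¹ • φ)))) := by
          rw [← hψeq, ← hφeq]
      _ = ((cψ * star cψ) * (cφ * star cφ)) • g (projv (vtens (cψ⁻¹ • ψ) (cφ⁻¹ • φ))) := by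
          rw [projv_vtens_smul_left, projv_vtens_smul_right, _root_.map_smul, _root_.map_smul, smul_smul]
      _ = 0 := by
          rw [key0 _ (normalize_unit ψ hψ0) _ (normalize_unit φ hφ0), smul_zero]
  have key2 : ∀ (ψ ψ' : A → ℂ) (φ : B → ℂ), g (pmat ψ ψ' φ φ) = 0 := by
    intro ψ ψ' φ
    have h4 : (4 : ℂ) • g (pmat ψ ψ' φ φ) = 0 := by
      rw [← _root_.map_smul, polarizeA]
      simp only [map_sub, map_add, _root_.map_smul, key1, smul_zero, sub_zero, add_zero]
    exact (smul_eq_zero.mp h4).resolve_left (by norm_num)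
  have key3 : ∀ (ψ ψ' : A → ℂ) (φ φ' : B → ℂ), g (pmat ψ ψ' φ φ') = 0 := by
    intro ψ ψ' φ φ'
    have h4 : (4 : ℂ) • g (pmat ψ ψ' φ φ') = 0 := by
      rw [← _root_.map_smul, polarizeB]
      simp only [map_sub, map_add, _root_.map_smul, key2, smul_zero, sub_zero, add_zero]
    exact (smul_eq_zero.mp h4).resolve_left (by norm_num)
  intro X
  calc g X = g (∑ p : A × B, ∑ q : A × B, Matrix.single p q (X p q)) := by
        rw [← Matrix.matrix_eq_sum_single X]
    _ = 0 := by
        rw [map_sum]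
        refine Finset.sum_eq_zero fun p _ => ?_
        rw [map_sum]
        refine Finset.sum_eq_zero fun q _ => ?_
        have hsb : Matrix.single p q (X p q)
            = (X p q) • Matrix.single p q (1 : ℂ) := by
          rw [Matrix.smul_single, smul_eq_mul, mul_one]
        rw [hsb, _root_.map_smul, pmat_single, key3, smul_zero]
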